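/- Let k be a field with the discrete topology and let U, V be topological k-vector spaces with linear topology. Consider the k-linear difference map d : (U ⊗_k V) × (U ⊗_k V) → U ⊗_k V, d(e₁, e₂) = e₁ − e₂, and the diagonal map δ : U ⊗_k V → (U ⊗_k V) × (U ⊗_k V), δ(w) = (w, w). Then: (a) d is continuous, surjective, and open as a map from (U ⊗^λ V) × (U ⊗^→ V) (with the product topology) to U ⊗^! V; (b) δ is a topological embedding of U ⊗^* V into (U ⊗^λ V) × (U ⊗^→ V), i.e., the *-topology on U ⊗_k V coincides with the topology induced on the diagonal from the product topology; moreover, the image of δ is exactly the kernel of d. -/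

import Mathlib

open Filter Topology TensorProduct

/-- A topological `k`-vector space has *linear topology* if the open `k`-subspaces form a basis
of neighborhoods of zero. -/
def HasLinearTopologyMod (k V : Type*) [Semiring k] [AddCommMonoid V] [Module k V]
    [TopologicalSpace V] : Prop :=
  ∀ s ∈ nhds (0 : V), ∃ U : Submodule k V, IsOpen (U : Set V) ∧ (U : Set V) ⊆ s

section TensorTopologies

variable {k U V : Type*} [CommRing k] [AddCommGroup U] [Module k U]
  [AddCommGroup V] [Module k V] [TopologicalSpace U] [TopologicalSpace V]

/-- `S·T`: the image of `S ⊗ T` in `U ⊗[k] V`, i.e. the span of the elementary tensors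
`s ⊗ₜ t` with `s ∈ S`, `t ∈ T`. -/
def tensorImage (S : Submodule k U) (T : Submodule k V) : Submodule k (U ⊗[k] V) :=
  Submodule.span k {w | ∃ s ∈ S, ∃ t ∈ T, w = s ⊗ₜ[k] t}

/-- The condition for a subspace `E ⊆ U ⊗ V` to be a basic neighborhood of `0` in the
`*`-topology. -/
def StarCond (E : Submodule k (U ⊗[k] V)) : Prop :=
  (∃ (P : Submodule k U) (Q : Submodule k V), IsOpen (P : Set U) ∧ IsOpen (Q : Set V) ∧
      tensorImage P Q ≤ E) ∧
  (∀ u : U, ∃ Q : Submodule k V, IsOpen (Q : Set V) ∧ ∀ q ∈ Q, u ⊗ₜ[k] q ∈ E) ∧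
  (∀ v : V, ∃ P : Submodule k U, IsOpen (P : Set U) ∧ ∀ p ∈ P, p ⊗ₜ[k] v ∈ E)

/-- The condition for a subspace `E ⊆ U ⊗ V` to be a basic neighborhood of `0` in the
`λ`-topology. -/
def LambdaCond (E : Submodule k (U ⊗[k] V)) : Prop :=
  (∃ P : Submodule k U, IsOpen (P : Set U) ∧ tensorImage P (⊤ : Submodule k V) ≤ E) ∧
  (∀ u : U, ∃ Q : Submodule k V, IsOpen (Q : Set V) ∧ ∀ q ∈ Q, u ⊗ₜ[k] q ∈ E)

/-- `τ` is the `*`-topology on `U ⊗[k] V`: a group topology in which the subspaces satisfying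
`StarCond` form a basis of neighborhoods of `0`. -/
def IsStarTopology (τ : TopologicalSpace (U ⊗[k] V)) : Prop :=
  @IsTopologicalAddGroup (U ⊗[k] V) τ _ ∧
  (@nhds _ τ 0).HasBasis (fun E : Submodule k (U ⊗[k] V) => StarCond E)
    (fun E => (E : Set (U ⊗[k] V)))

/-- `τ` is the `λ`-topology on `U ⊗[k] V`. -/
def IsLambdaTopology (τ : TopologicalSpace (U ⊗[k] V)) : Prop :=
  @IsTopologicalAddGroup (U ⊗[k] V) τ _ ∧
  (@nhds _ τ 0).HasBasis (fun E : Submodule k (U ⊗[k] V) => LambdaCond E)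
    (fun E => (E : Set (U ⊗[k] V)))

/-- `τ` is the `!`-topology on `U ⊗[k] V`: a group topology in which the subspaces
`P·V + U·Q`, with `P ⊆ U` and `Q ⊆ V` open subspaces, form a basis of neighborhoods of `0`. -/
def IsShriekTopology (τ : TopologicalSpace (U ⊗[k] V)) : Prop :=
  @IsTopologicalAddGroup (U ⊗[k] V) τ _ ∧
  (@nhds _ τ 0).HasBasis
    (fun PQ : Submodule k U × Submodule k V =>
      IsOpen (PQ.1 : Set U) ∧ IsOpen (PQ.2 : Set V))
    (fun PQ => ((tensorImage PQ.1 (⊤ : Submodule k V) ⊔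
      tensorImage (⊤ : Submodule k U) PQ.2 : Submodule k (U ⊗[k] V)) : Set (U ⊗[k] V)))

/-- The condition for a subspace `E ⊆ U ⊗ V` to be a basic neighborhood of `0` in the
`→`-topology (the opposite of the `λ`-topology). -/
def ArrowCond (E : Submodule k (U ⊗[k] V)) : Prop :=
  (∃ Q : Submodule k V, IsOpen (Q : Set V) ∧ tensorImage (⊤ : Submodule k U) Q ≤ E) ∧
  (∀ v : V, ∃ P : Submodule k U, IsOpen (P : Set U) ∧ ∀ p ∈ P, p ⊗ₜ[k] v ∈ E)

/-- `τ` is the `→`-topology on `U ⊗[k] V`. -/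
def IsArrowTopology (τ : TopologicalSpace (U ⊗[k] V)) : Prop :=
  @IsTopologicalAddGroup (U ⊗[k] V) τ _ ∧
  (@nhds _ τ 0).HasBasis (fun E : Submodule k (U ⊗[k] V) => ArrowCond E)
    (fun E => (E : Set (U ⊗[k] V)))

end TensorTopologies

section AuxLemmas

variable {k U V : Type*} [Field k] [AddCommGroup U] [Module k U]
  [AddCommGroup V] [Module k V] [TopologicalSpace U] [TopologicalSpace V]

omit [TopologicalSpace U] [TopologicalSpace V] in
theorem tensorImage_mono' {S S' : Submodule k U} {T T' : Submodule k V}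
    (hS : S ≤ S') (hT : T ≤ T') : tensorImage S T ≤ tensorImage S' T' :=
  Submodule.span_mono (fun _w ⟨s, hs, t, ht, hw⟩ => ⟨s, hS hs, t, hT ht, hw⟩)

omit [TopologicalSpace U] [TopologicalSpace V] in
theorem tmul_mem_tensorImage' {S : Submodule k U} {T : Submodule k V} {s : U} {t : V}
    (hs : s ∈ S) (ht : t ∈ T) : s ⊗ₜ[k] t ∈ tensorImage S T :=
  Submodule.subset_span ⟨s, hs, t, ht, rfl⟩

omit [TopologicalSpace U] [TopologicalSpace V] in
theorem tensorImage_inf_le' {P : Submodule k U} {Q : Submodule k V} :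
    tensorImage P (⊤ : Submodule k V) ⊓ tensorImage (⊤ : Submodule k U) Q ≤ tensorImage P Q := by
  obtain ⟨Q', hQ'⟩ := Q.exists_isCompl
  set π : V →ₗ[k] V := Q.subtype ∘ₗ Q.projectionOnto Q' hQ' with hπ
  have hπQ : ∀ q ∈ Q, π q = q := fun q hq => by
    simp [hπ, Submodule.projectionOnto_apply_of_mem_left hQ' hq]
  have hπmem : ∀ v : V, π v ∈ Q := fun v => Submodule.coe_mem _
  rintro x ⟨hx1, hx2⟩
  have hA : ∀ y ∈ tensorImage (⊤ : Submodule k U) Q, LinearMap.lTensor U π y = y := by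
    intro y hy
    refine Submodule.span_induction (fun w hw => ?_) (by simp)
      (fun a b _ _ ha hb => by rw [map_add, ha, hb])
      (fun c a _ ha => by rw [map_smul, ha]) hy
    obtain ⟨s, -, t, ht, rfl⟩ := hw
    rw [LinearMap.lTensor_tmul, hπQ t ht]
  have hB : ∀ y ∈ tensorImage P (⊤ : Submodule k V),
      LinearMap.lTensor U π y ∈ tensorImage P Q := by
    intro y hy
    refine Submodule.span_induction (fun w hw => ?_) (by simp)
      (fun a b _ _ ha hb => by rw [map_add]; exact Submodule.add_mem _ ha hb)
      (fun c a _ ha => by rw [map_smul]; exact Submodule.smul_mem _ _ ha) hy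
    obtain ⟨s, hs, t, -, rfl⟩ := hw
    rw [LinearMap.lTensor_tmul]
    exact tmul_mem_tensorImage' hs (hπmem t)
  rw [← hA x hx2]
  exact hB x hx1

end AuxLemmas

section TopAux
variable {G H : Type*} [AddCommGroup G] [AddCommGroup H] [TopologicalSpace G]
  [TopologicalSpace H] [IsTopologicalAddGroup G] [IsTopologicalAddGroup H]

theorem auxProdTAddG' : IsTopologicalAddGroup (G × H) := inferInstance

theorem auxCont' (f : G →+ H) (h : Tendsto f (𝓝 0) (𝓝 0)) : Continuous f :=
  continuous_of_continuousAt_zero f (by simpa [ContinuousAt] using h)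

theorem auxOpen' (f : G →+ H) (h : 𝓝 (0 : H) ≤ (𝓝 (0 : G)).map f) : IsOpenMap f := by
  refine IsOpenMap.of_nhds_le fun a => ?_
  calc 𝓝 (f a) = map (f a + ·) (𝓝 0) := (map_add_left_nhds_zero (f a)).symm
    _ ≤ map (f a + ·) (map f (𝓝 0)) := map_mono h
    _ = map f (map (a + ·) (𝓝 0)) := by
        rw [Filter.map_map, Filter.map_map]
        congr 1
        funext x
        simp [map_add]
    _ = map f (𝓝 a) := by rw [map_add_left_nhds_zero]

omit [TopologicalSpace G] [IsTopologicalAddGroup G] in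
theorem auxInduced' (f : G →+ H) :
    @IsTopologicalAddGroup G (TopologicalSpace.induced f ‹TopologicalSpace H›) _ :=
  topologicalAddGroup_induced f

end TopAux

/-- Let `k` be a field with the discrete topology and `U`, `V` topological
`k`-vector spaces with linear topology.  Consider the difference map
`d : (U ⊗ V) × (U ⊗ V) → U ⊗ V`, `d (e₁, e₂) = e₁ - e₂`, and the diagonal map
`δ : U ⊗ V → (U ⊗ V) × (U ⊗ V)`, `δ w = (w, w)`.  Then:
(a) `d` is continuous, surjective and open from `(U ⊗^λ V) × (U ⊗^→ V)` (product topology) to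
    `U ⊗^! V`;
(b) the `*`-topology on `U ⊗ V` is the topology induced by `δ` from the product topology on
    `(U ⊗^λ V) × (U ⊗^→ V)` (so `δ` is a topological embedding), and the image of `δ` is
    exactly the kernel of `d`. -/
theorem statement19 {k : Type*} [Field k] [TopologicalSpace k] [DiscreteTopology k]
    {U V : Type*}
    [AddCommGroup U] [Module k U] [TopologicalSpace U] [IsTopologicalAddGroup U]
    [ContinuousSMul k U] (hU : HasLinearTopologyMod k U)
    [AddCommGroup V] [Module k V] [TopologicalSpace V] [IsTopologicalAddGroup V]
    [ContinuousSMul k V] (hV : HasLinearTopologyMod k V)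
    (τs : TopologicalSpace (U ⊗[k] V)) (hτs : IsStarTopology τs)
    (τl : TopologicalSpace (U ⊗[k] V)) (hτl : IsLambdaTopology τl)
    (τa : TopologicalSpace (U ⊗[k] V)) (hτa : IsArrowTopology τa)
    (τe : TopologicalSpace (U ⊗[k] V)) (hτe : IsShriekTopology τe)
    (T : TopologicalSpace ((U ⊗[k] V) × (U ⊗[k] V)))
    (hT : T = @instTopologicalSpaceProd (U ⊗[k] V) (U ⊗[k] V) τl τa)
    (d : (U ⊗[k] V) × (U ⊗[k] V) → U ⊗[k] V) (hd : d = fun e => e.1 - e.2)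
    (δ : U ⊗[k] V → (U ⊗[k] V) × (U ⊗[k] V)) (hδ : δ = fun w => (w, w)) :
    (@Continuous _ _ T τe d ∧ Function.Surjective d ∧ @IsOpenMap _ _ T τe d) ∧
    (τs = @TopologicalSpace.induced (U ⊗[k] V) ((U ⊗[k] V) × (U ⊗[k] V)) δ T ∧
      Set.range δ = {e | d e = 0}) := by
  obtain ⟨gs, bs⟩ := hτs
  obtain ⟨gl, bl⟩ := hτl
  obtain ⟨ga, ba⟩ := hτa
  obtain ⟨ge, be⟩ := hτe
  subst hT hd hδ
  set prodT := @instTopologicalSpaceProd (U ⊗[k] V) (U ⊗[k] V) τl τa with hprodT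
  have gT : @IsTopologicalAddGroup ((U ⊗[k] V) × (U ⊗[k] V)) prodT _ :=
    @auxProdTAddG' (U ⊗[k] V) (U ⊗[k] V) _ _ τl τa gl ga
  set D : (U ⊗[k] V) × (U ⊗[k] V) →+ U ⊗[k] V :=
    (AddMonoidHom.fst _ _) - (AddMonoidHom.snd _ _) with hDdef
  have hD : ⇑D = fun e : (U ⊗[k] V) × (U ⊗[k] V) => e.1 - e.2 := rfl
  have hn0 : @nhds _ prodT (0 : (U ⊗[k] V) × (U ⊗[k] V)) =
      (@nhds _ τl 0) ×ˢ (@nhds _ τa 0) := @nhds_prod_eq _ _ τl τa 0 0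
  -- basic `!`-sets satisfy the λ- and →-conditions
  have hW : ∀ (P : Submodule k U) (Q : Submodule k V), IsOpen (P : Set U) → IsOpen (Q : Set V) →
      LambdaCond (tensorImage P ⊤ ⊔ tensorImage ⊤ Q) ∧
      ArrowCond (tensorImage P ⊤ ⊔ tensorImage ⊤ Q) := by
    intro P Q hP hQ
    refine ⟨⟨⟨P, hP, le_sup_left⟩, fun u => ⟨Q, hQ, fun q hq =>
        Submodule.mem_sup_right (tmul_mem_tensorImage' Submodule.mem_top hq)⟩⟩,
      ⟨⟨Q, hQ, le_sup_right⟩, fun v => ⟨P, hP, fun p hp =>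
        Submodule.mem_sup_left (tmul_mem_tensorImage' hp Submodule.mem_top)⟩⟩⟩
  -- continuity of `d`
  have hT0 : Tendsto (⇑D) (@nhds _ prodT 0) (@nhds _ τe 0) := by
    rw [hn0]
    refine ((bl.prod ba).tendsto_iff be).2 ?_
    rintro ⟨P, Q⟩ ⟨hP, hQ⟩
    obtain ⟨hL, hA⟩ := hW P Q hP hQ
    refine ⟨(tensorImage P ⊤ ⊔ tensorImage ⊤ Q, tensorImage P ⊤ ⊔ tensorImage ⊤ Q),
      ⟨hL, hA⟩, ?_⟩
    rintro ⟨x, y⟩ ⟨hx, hy⟩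
    exact Submodule.sub_mem _ hx hy
  have hcont : @Continuous _ _ prodT τe (fun e : (U ⊗[k] V) × (U ⊗[k] V) => e.1 - e.2) :=
    @auxCont' _ _ _ _ prodT τe gT ge D hT0
  -- openness of `d`
  have hle : @nhds _ τe 0 ≤ ((@nhds _ prodT 0).map ⇑D) := by
    rw [hn0]
    refine (be.le_basis_iff ((bl.prod ba).map _)).2 ?_
    rintro ⟨E₁, E₂⟩ ⟨hE₁, hE₂⟩
    obtain ⟨P, hP, hPle⟩ := hE₁.1
    obtain ⟨Q, hQ, hQle⟩ := hE₂.1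
    refine ⟨(P, Q), ⟨hP, hQ⟩, ?_⟩
    intro w hw
    obtain ⟨a, ha, b, hb, rfl⟩ := Submodule.mem_sup.1 hw
    refine ⟨(a, -b), Set.mem_prod.2 ⟨hPle ha, Submodule.neg_mem _ (hQle hb)⟩, ?_⟩
    show a - -b = a + b
    rw [sub_neg_eq_add]
  have hopen : @IsOpenMap _ _ prodT τe (fun e : (U ⊗[k] V) × (U ⊗[k] V) => e.1 - e.2) :=
    @auxOpen' _ _ _ _ prodT τe gT ge D hle
  -- the diagonal as an additive hom
  set Dδ : U ⊗[k] V →+ (U ⊗[k] V) × (U ⊗[k] V) :=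
    (AddMonoidHom.id _).prod (AddMonoidHom.id _) with hDδdef
  have gind : @IsTopologicalAddGroup (U ⊗[k] V)
      (TopologicalSpace.induced (fun w : U ⊗[k] V => (w, w)) prodT) _ :=
    @auxInduced' (U ⊗[k] V) ((U ⊗[k] V) × (U ⊗[k] V)) _ _ prodT gT Dδ
  -- equality of nhds filters at 0
  have key : @nhds _ τs 0 = Filter.comap (fun w : U ⊗[k] V => (w, w))
      ((@nhds _ τl 0) ×ˢ (@nhds _ τa 0)) := by
    apply le_antisymm
    · refine (bs.le_basis_iff ((bl.prod ba).comap _)).2 ?_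
      rintro ⟨E₁, E₂⟩ ⟨hE₁, hE₂⟩
      obtain ⟨P, hP, hPle⟩ := hE₁.1
      obtain ⟨Q, hQ, hQle⟩ := hE₂.1
      refine ⟨E₁ ⊓ E₂, ⟨⟨P, Q, hP, hQ, ?_⟩, fun u => ?_, fun v => ?_⟩, ?_⟩
      · exact le_inf (le_trans (tensorImage_mono' le_rfl le_top) hPle)
          (le_trans (tensorImage_mono' le_top le_rfl) hQle)
      · obtain ⟨Qu, hQu, hQu'⟩ := hE₁.2 u
        refine ⟨Qu ⊓ Q, by rw [Submodule.coe_inf]; exact hQu.inter hQ, fun q hq => ?_⟩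
        obtain ⟨hq1, hq2⟩ := Submodule.mem_inf.1 hq
        exact Submodule.mem_inf.2 ⟨hQu' q hq1,
          hQle (tmul_mem_tensorImage' Submodule.mem_top hq2)⟩
      · obtain ⟨Pv, hPv, hPv'⟩ := hE₂.2 v
        refine ⟨Pv ⊓ P, by rw [Submodule.coe_inf]; exact hPv.inter hP, fun p hp => ?_⟩
        obtain ⟨hp1, hp2⟩ := Submodule.mem_inf.1 hp
        exact Submodule.mem_inf.2 ⟨hPle (tmul_mem_tensorImage' hp2 Submodule.mem_top),
          hPv' p hp1⟩
      · intro x hx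
        obtain ⟨hx1, hx2⟩ := Submodule.mem_inf.1 hx
        exact Set.mem_prod.2 ⟨hx1, hx2⟩
    · refine (((bl.prod ba).comap _).le_basis_iff bs).2 ?_
      intro E hE
      obtain ⟨⟨P, Q, hP, hQ, hPQ⟩, hu, hv⟩ := hE
      refine ⟨(tensorImage P ⊤ ⊔ (E ⊓ tensorImage ⊤ Q),
        tensorImage ⊤ Q ⊔ (E ⊓ tensorImage P ⊤)),
        ⟨⟨⟨P, hP, le_sup_left⟩, fun u => ?_⟩, ⟨⟨Q, hQ, le_sup_left⟩, fun v => ?_⟩⟩, ?_⟩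
      · obtain ⟨Qu, hQu, hQu'⟩ := hu u
        refine ⟨Qu ⊓ Q, by rw [Submodule.coe_inf]; exact hQu.inter hQ, fun q hq => ?_⟩
        obtain ⟨hq1, hq2⟩ := Submodule.mem_inf.1 hq
        exact Submodule.mem_sup_right (Submodule.mem_inf.2 ⟨hQu' q hq1,
          tmul_mem_tensorImage' Submodule.mem_top hq2⟩)
      · obtain ⟨Pv, hPv, hPv'⟩ := hv v
        refine ⟨Pv ⊓ P, by rw [Submodule.coe_inf]; exact hPv.inter hP, fun p hp => ?_⟩
        obtain ⟨hp1, hp2⟩ := Submodule.mem_inf.1 hp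
        exact Submodule.mem_sup_right (Submodule.mem_inf.2 ⟨hPv' p hp1,
          tmul_mem_tensorImage' hp2 Submodule.mem_top⟩)
      · intro x hx
        obtain ⟨hx1, hx2⟩ := hx
        obtain ⟨a, ha, g₁, hg₁, hax⟩ := Submodule.mem_sup.1 hx1
        obtain ⟨b, hb, g₂, hg₂, hbx⟩ := Submodule.mem_sup.1 hx2
        obtain ⟨hg₁E, hg₁Q⟩ := Submodule.mem_inf.1 hg₁
        obtain ⟨hg₂E, hg₂P⟩ := Submodule.mem_inf.1 hg₂
        have hy : x - g₁ - g₂ ∈ tensorImage P (⊤ : Submodule k V) ⊓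
            tensorImage (⊤ : Submodule k U) Q := by
          refine Submodule.mem_inf.2 ⟨?_, ?_⟩
          · have hax' : a + g₁ = x := hax
            have hxa : x - g₁ - g₂ = a - g₂ := by rw [← hax']; abel
            rw [hxa]; exact Submodule.sub_mem _ ha hg₂P
          · have hbx' : b + g₂ = x := hbx
            have hxb : x - g₁ - g₂ = b - g₁ := by rw [← hbx']; abel
            rw [hxb]; exact Submodule.sub_mem _ hb hg₁Q
        have hyE : x - g₁ - g₂ ∈ E := hPQ (tensorImage_inf_le' hy)
        have hfin := Submodule.add_mem E (Submodule.add_mem E hyE hg₁E) hg₂E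
        have hxeq : x - g₁ - g₂ + g₁ + g₂ = x := by abel
        rwa [hxeq] at hfin
  have hnhds : @nhds _ τs 0 =
      @nhds _ (TopologicalSpace.induced (fun w : U ⊗[k] V => (w, w)) prodT) 0 := by
    rw [key, @nhds_induced _ _ prodT (fun w : U ⊗[k] V => (w, w)) 0]
    congr 1
    exact hn0.symm
  refine ⟨⟨hcont, fun w => ⟨(w, 0), by simp⟩, hopen⟩,
    IsTopologicalAddGroup.ext gs gind hnhds, ?_⟩
  ext e
  simp only [Set.mem_range, Set.mem_setOf_eq, sub_eq_zero, Prod.ext_iff]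
  constructor
  · rintro ⟨w, h1, h2⟩
    rw [← h1, ← h2]
  · exact fun h => ⟨e.1, rfl, h⟩
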